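/- Let D be a non-Hamiltonian 2-strong digraph of order n such that n−1 of its vertices have degree at least n+1 and the remaining vertex z has degree at most n−2. Suppose C = x_1 x_2 … x_m z x_1, with 2 ≤ m ≤ n−3, is a longest directed cycle through z in D, and Y = V(D) \ V(C) contains two distinct vertices y_1, y_2 that are mutually reachable in D⟨Y⟩ and satisfy d(y_i, {x_1, …, x_m}) = m+1 for each i ∈ {1,2}. Then there exists an integer l with 2 ≤ l ≤ m−1 such that every vertex of {x_l, x_{l+1}, …, x_m} dominates both y_1 and y_2, and both y_1 and y_2 dominate every vertex of {x_1, x_2, …, x_l}. -/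

import Mathlib

/-! A digraph on a vertex type `V` is given by its arc relation `A : V → V → Prop`
(this automatically forbids multiple arcs); looplessness is expressed by the
hypothesis `Irreflexive A`. -/

/-- The degree of `x`: its out-degree plus its in-degree. -/
noncomputable def degree {V : Type*} (A : V → V → Prop) (x : V) : ℕ :=
  {y | A x y}.ncard + {y | A y x}.ncard

/-- `degreeIn A x S` is the number of arcs between `x` and vertices of `S`,
in both directions. -/
noncomputable def degreeIn {V : Type*} (A : V → V → Prop) (x : V) (S : Set V) : ℕ :=
  {y ∈ S | A x y}.ncard + {y ∈ S | A y x}.ncard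

/-- `c : Fin m → V` is a directed cycle of length `m` (indices taken mod `m`). -/
def IsCycle {V : Type*} (A : V → V → Prop) {m : ℕ} (c : Fin m → V) : Prop :=
  2 ≤ m ∧ Function.Injective c ∧
    ∀ i : Fin m, A (c i) (c ⟨(i.val + 1) % m, Nat.mod_lt _ i.pos⟩)

/-- `p : Fin m → V` is a directed path on `m` vertices (of length `m - 1`). -/
def IsPath {V : Type*} (A : V → V → Prop) {m : ℕ} (p : Fin m → V) : Prop :=
  Function.Injective p ∧ ∀ (i : Fin m) (h : i.val + 1 < m), A (p i) (p ⟨i.val + 1, h⟩)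

/-- A digraph is Hamiltonian if it has a directed cycle through all of its vertices. -/
def IsHamiltonian {V : Type*} [Fintype V] (A : V → V → Prop) : Prop :=
  ∃ c : Fin (Fintype.card V) → V, IsCycle A c ∧ Function.Surjective c

/-- Reachability by a directed path staying inside the set `S`. -/
def ReachIn {V : Type*} (A : V → V → Prop) (S : Set V) : V → V → Prop :=
  Relation.ReflTransGen (fun u v => u ∈ S ∧ v ∈ S ∧ A u v)

/-- A digraph is strong if every vertex is reachable from every other by a directed path. -/
def IsStrong {V : Type*} (A : V → V → Prop) : Prop :=
  ∀ x y : V, Relation.ReflTransGen A x y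

/-- A digraph is `k`-strong if it has at least `k + 1` vertices and the deletion of
any set of at most `k - 1` vertices leaves a strong digraph. -/
def IsKStrong {V : Type*} [Fintype V] (A : V → V → Prop) (k : ℕ) : Prop :=
  k + 1 ≤ Fintype.card V ∧
    ∀ S : Set V, S.ncard ≤ k - 1 → ∀ x ∈ Sᶜ, ∀ y ∈ Sᶜ, ReachIn A Sᶜ x y


section compat
variable {α : Type*}

theorem List.chain'_iff_get {R : α → α → Prop} {l : List α} :
    List.Chain' R l ↔ ∀ (i : ℕ) (h : i < l.length - 1),
      R (l.get ⟨i, by omega⟩) (l.get ⟨i + 1, by omega⟩) := by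
  unfold List.Chain'
  rw [List.isChain_iff_getElem]
  constructor
  · intro h i hi
    exact h i (by omega)
  · intro h i hi
    exact h i (by omega)

theorem List.chain'_append {R : α → α → Prop} {l₁ l₂ : List α} :
    List.Chain' R (l₁ ++ l₂) ↔ List.Chain' R l₁ ∧ List.Chain' R l₂ ∧
      ∀ x ∈ l₁.getLast?, ∀ y ∈ l₂.head?, R x y :=
  List.isChain_append

theorem List.chain'_cons {R : α → α → Prop} {x y : α} {l : List α} :
    List.Chain' R (x :: y :: l) ↔ R x y ∧ List.Chain' R (y :: l) :=
  List.isChain_cons_cons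

theorem List.chain'_cons' {R : α → α → Prop} {x : α} {l : List α} :
    List.Chain' R (x :: l) ↔ (∀ y ∈ l.head?, R x y) ∧ List.Chain' R l :=
  List.isChain_cons

theorem List.chain'_reverse {R : α → α → Prop} {l : List α} :
    List.Chain' R (List.reverse l) ↔ List.Chain' (flip R) l :=
  List.isChain_reverse

theorem List.chain'_singleton {R : α → α → Prop} (a : α) : List.Chain' R [a] :=
  List.isChain_singleton a

theorem List.length_pos {l : List α} : 0 < List.length l ↔ l ≠ [] := by
  cases l <;> simp

end compat

section helpers
variable {V : Type*}

/-- `seg f a k = [f a, f (a+1), …, f (a+k-1)]`. -/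
def seg (f : ℕ → V) : ℕ → ℕ → List V
  | _, 0 => []
  | a, k+1 => f a :: seg f (a+1) k

@[simp] lemma seg_length (f : ℕ → V) (a k : ℕ) : (seg f a k).length = k := by
  induction k generalizing a with
  | zero => rfl
  | succ k ih => simp [seg, ih]

lemma mem_seg {f : ℕ → V} {v : V} {a k : ℕ} :
    v ∈ seg f a k ↔ ∃ j, j < k ∧ v = f (a + j) := by
  induction k generalizing a with
  | zero => simp [seg]
  | succ k ih =>
    simp only [seg, List.mem_cons, ih]
    constructor
    · rintro (rfl | ⟨j, hj, rfl⟩)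
      · exact ⟨0, by omega, by simp⟩
      · exact ⟨j+1, by omega, by rw [show a + (j+1) = a + 1 + j by omega]⟩
    · rintro ⟨j, hj, rfl⟩
      match j with
      | 0 => left; simp
      | j+1 => right; exact ⟨j, by omega, by rw [show a + 1 + j = a + (j+1) by omega]⟩

lemma head?_seg (f : ℕ → V) (a k : ℕ) (hk : k ≠ 0) : (seg f a k).head? = some (f a) := by
  match k with
  | 0 => omega
  | k+1 => rfl

lemma getLast?_seg (f : ℕ → V) (a k : ℕ) (hk : k ≠ 0) :
    (seg f a k).getLast? = some (f (a + k - 1)) := by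
  induction k generalizing a with
  | zero => omega
  | succ k ih =>
    match k with
    | 0 => simp [seg]
    | k+1 =>
      show (f a :: seg f (a+1) (k+1)).getLast? = _
      rw [show (f a :: seg f (a+1) (k+1)) = f a :: (f (a+1) :: seg f (a+2) k) from rfl,
        List.getLast?_cons_cons]
      rw [show (f (a+1) :: seg f (a+2) k) = seg f (a+1) (k+1) from rfl, ih _ (by omega),
        show a + 1 + (k+1) - 1 = a + (k+1+1) - 1 by omega]

lemma get_seg {f : ℕ → V} {a k : ℕ} (i : ℕ) (hi : i < (seg f a k).length) :
    (seg f a k).get ⟨i, hi⟩ = f (a + i) := by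
  induction k generalizing a i with
  | zero => simp at hi
  | succ k ih =>
    match i with
    | 0 => simp [seg]
    | i+1 =>
      show (seg f (a+1) k).get ⟨i, _⟩ = _
      rw [ih]
      congr 1
      omega

lemma chain'_seg {A : V → V → Prop} {f : ℕ → V} {a k : ℕ}
    (h : ∀ j, j + 1 < k → A (f (a + j)) (f (a + j + 1))) :
    (seg f a k).Chain' A := by
  rw [List.chain'_iff_get]
  intro i hi
  rw [get_seg, get_seg]
  simp only [seg_length] at hi
  have := h i (by omega)
  rwa [show a + i + 1 = a + (i+1) by omega] at this

lemma nodup_seg {f : ℕ → V} {a k : ℕ}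
    (h : ∀ j₁ j₂, j₁ < k → j₂ < k → f (a + j₁) = f (a + j₂) → j₁ = j₂) :
    (seg f a k).Nodup := by
  rw [List.nodup_iff_injective_get]
  rintro ⟨i, hi⟩ ⟨j, hj⟩ he
  rw [get_seg, get_seg] at he
  simp only [seg_length] at hi hj
  exact Fin.ext (h i j hi hj he)



lemma cycle_bound {V : Type*} {A : V → V → Prop} {m : ℕ} {z : V}
    (hlongest : ∀ (r : ℕ) (c : Fin r → V), IsCycle A c → z ∈ Set.range c → r ≤ m + 1)
    (L : List V) (h2 : 2 ≤ L.length) (hnd : L.Nodup) (hch : L.Chain' A)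
    (hne : L ≠ [])
    (hcl : A (L.getLast hne) (L.head hne)) (hz : z ∈ L) : L.length ≤ m + 1 := by
  apply hlongest L.length (fun i => L.get i)
  · refine ⟨h2, (List.nodup_iff_injective_get).mp hnd, ?_⟩
    intro i
    show A (L.get i) (L.get ⟨(i.val + 1) % L.length, Nat.mod_lt _ i.pos⟩)
    rcases lt_or_ge (i.val + 1) L.length with h | h
    · have he : (⟨(i.val + 1) % L.length, Nat.mod_lt _ i.pos⟩ : Fin L.length)
          = ⟨i.val + 1, by omega⟩ := Fin.ext (Nat.mod_eq_of_lt h)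
      rw [he]
      exact List.chain'_iff_get.mp hch i.val (by omega)
    · have hi : i.val = L.length - 1 := by omega
      have h0 : ((i.val + 1) % L.length) = 0 := by
        rw [show i.val + 1 = L.length by omega, Nat.mod_self]
      have e1 : L.get i = L.getLast hne := by
        simp only [List.getLast_eq_getElem, List.get_eq_getElem, hi]
      have e2 : L.get ⟨(i.val + 1) % L.length, Nat.mod_lt _ i.pos⟩ = L.head hne := by
        rw [← List.get_mk_zero (by omega), ]
        congr 1
        exact Fin.ext h0
      rw [e1, e2]
      exact hcl
  · obtain ⟨i, hi⟩ := List.mem_iff_get.mp hz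
    exact ⟨i, hi⟩

end helpers

lemma assemble {V : Type*} {A : V → V → Prop} {m : ℕ} {z : V} {Y : Set V}
    (hm : 2 ≤ m) (f : ℕ → V)
    (hfinj : ∀ i j, i < m → j < m → f i = f j → i = j)
    (hfz : ∀ i, i < m → f i ≠ z)
    (hfarc : ∀ i, i + 1 < m → A (f i) (f (i+1)))
    (hfz1 : A (f (m-1)) z)
    (hfz2 : A z (f 0))
    (hYf : ∀ v ∈ Y, ∀ i, i < m → v ≠ f i)
    (hYz : z ∉ Y)
    (hlongest : ∀ (r : ℕ) (c : Fin r → V), IsCycle A c → z ∈ Set.range c → r ≤ m + 1)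
    (s t : ℕ) (hst : s ≤ t) (htm : t ≤ m)
    (Q : List V) (hne : Q ≠ []) (hQY : ∀ v ∈ Q, v ∈ Y)
    (hQnd : Q.Nodup) (hQch : Q.Chain' A)
    (hin : 0 < s → A (f (s-1)) (Q.head hne))
    (hin0 : s = 0 → A z (Q.head hne))
    (hout : t < m → A (Q.getLast hne) (f t))
    (hout0 : t = m → A (Q.getLast hne) z) :
    Q.length ≤ t - s := by
  classical
  set P1 : List V := seg f 0 s with hP1
  set P2 : List V := seg f t (m - t) with hP2
  set L : List V := P1 ++ Q ++ (P2 ++ [z]) with hL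
  have hlen : L.length = s + Q.length + (m - t) + 1 := by
    simp [hL, hP1, hP2]
    omega
  have hQlen : 1 ≤ Q.length := by
    cases Q with
    | nil => exact absurd rfl hne
    | cons a l => simp
  -- membership characterizations
  have hmemP1 : ∀ v ∈ P1, ∃ j, j < s ∧ v = f j := by
    intro v hv
    obtain ⟨j, hj, rfl⟩ := mem_seg.mp hv
    exact ⟨j, by omega, by rw [Nat.zero_add]⟩
  have hmemP2 : ∀ v ∈ P2, ∃ j, t ≤ j ∧ j < m ∧ v = f j := by
    intro v hv
    obtain ⟨j, hj, rfl⟩ := mem_seg.mp hv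
    exact ⟨t + j, by omega, by omega, rfl⟩
  -- nodup
  have hndP1 : P1.Nodup := nodup_seg (fun j₁ j₂ h₁ h₂ he => hfinj _ _ (by omega) (by omega) (by simpa using he))
  have hndP2 : P2.Nodup := nodup_seg (fun j₁ j₂ h₁ h₂ he => by
    have := hfinj _ _ (by omega : t + j₁ < m) (by omega : t + j₂ < m) he
    omega)
  have hdisj1 : ∀ v ∈ P1, v ∉ Q := by
    intro v hv hvQ
    obtain ⟨j, hj, rfl⟩ := hmemP1 v hv
    exact hYf _ (hQY _ hvQ) j (by omega) rfl
  have hdisj2 : ∀ v ∈ Q, v ∉ P2 := by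
    intro v hv hvP
    obtain ⟨j, _, hj, rfl⟩ := hmemP2 v hvP
    exact hYf _ (hQY _ hv) j hj rfl
  have hdisj3 : ∀ v ∈ P1, v ∉ P2 := by
    intro v hv hvP
    obtain ⟨j, hj, rfl⟩ := hmemP1 v hv
    obtain ⟨j', hj', hj'', he⟩ := hmemP2 _ hvP
    have := hfinj _ _ (by omega) hj'' he
    omega
  have hzP1 : z ∉ P1 := fun hv => by
    obtain ⟨j, hj, he⟩ := hmemP1 z hv
    exact hfz j (by omega) he.symm
  have hzP2 : z ∉ P2 := fun hv => by
    obtain ⟨j, _, hj, he⟩ := hmemP2 z hv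
    exact hfz j hj he.symm
  have hzQ : z ∉ Q := fun hv => hYz (hQY _ hv)
  have hnd : L.Nodup := by
    rw [hL]
    rw [List.nodup_append', List.nodup_append']
    refine ⟨⟨hndP1, hQnd, fun v hv => hdisj1 v hv⟩, ?_, ?_⟩
    · rw [List.nodup_append']
      refine ⟨hndP2, List.nodup_singleton z, fun v hv => ?_⟩
      simp only [List.mem_singleton]
      rintro rfl
      exact hzP2 hv
    · intro v hv
      rw [List.mem_append] at hv
      simp only [List.mem_append, List.mem_singleton]
      rintro (hv2 | rfl)
      · rcases hv with hv | hv
        · exact hdisj3 v hv hv2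
        · exact hdisj2 v hv hv2
      · rcases hv with hv | hv
        · exact hzP1 hv
        · exact hzQ hv
  -- chain
  have hchP1 : P1.Chain' A := chain'_seg (fun j hj => by simpa using hfarc j (by omega))
  have hchP2 : P2.Chain' A := chain'_seg (fun j hj => hfarc (t+j) (by omega))
  have hch : L.Chain' A := by
    rw [hL, List.chain'_append, List.chain'_append, List.chain'_append]
    refine ⟨⟨hchP1, hQch, ?_⟩, ⟨hchP2, List.chain'_singleton z, ?_⟩, ?_⟩
    · -- last of P1 → head of Q
      intro u hu v hv
      rcases Nat.eq_zero_or_pos s with hs | hs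
      · rw [hP1, hs] at hu
        simp [seg] at hu
      · rw [hP1, getLast?_seg f 0 s (by omega)] at hu
        rw [List.head?_eq_head hne] at hv
        obtain rfl : u = f (s-1) := by simpa using hu.symm
        obtain rfl : v = Q.head hne := by simpa using hv.symm
        exact hin hs
    · -- last of P2 → z
      intro u hu v hv
      obtain rfl : v = z := by simpa using hv.symm
      rcases Nat.eq_or_lt_of_le htm with ht | ht
      · rw [hP2, ht] at hu
        simp [seg, Nat.sub_self] at hu
      · rw [hP2, getLast?_seg f t (m-t) (by omega)] at hu
        obtain rfl : u = f (t + (m-t) - 1) := by simpa using hu.symm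
        rw [show t + (m-t) - 1 = m - 1 by omega]
        exact hfz1
    · -- last of Q → head of (P2 ++ [z])
      intro u hu v hv
      rw [List.getLast?_append_of_ne_nil _ hne] at hu
      rw [List.getLast?_eq_getLast hne] at hu
      obtain rfl : u = Q.getLast hne := by simpa using hu.symm
      rcases Nat.eq_or_lt_of_le htm with ht | ht
      · rw [hP2, ht, Nat.sub_self] at hv
        simp only [seg, List.nil_append, List.head?_cons] at hv
        obtain rfl : v = z := by simpa using hv.symm
        exact hout0 ht
      · rw [List.head?_append_of_ne_nil] at hv
        · rw [hP2, head?_seg f t (m-t) (by omega)] at hv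
          obtain rfl : v = f t := by simpa using hv.symm
          exact hout ht
        · rw [hP2]
          intro hnil
          have := seg_length f t (m - t)
          rw [hnil] at this
          simp at this
          omega
  have hLne : L ≠ [] := by
    intro h
    have := congrArg List.length h
    rw [hlen] at this
    simp at this
  have hhead : L.head hLne = if 0 < s then f 0 else Q.head hne := by
    rw [← Option.some_inj, ← List.head?_eq_head]
    rcases Nat.eq_zero_or_pos s with hs | hs
    · rw [if_neg (by omega)]
      have hLQ : L = Q ++ (P2 ++ [z]) := by rw [hL, hP1, hs]; rfl
      rw [hLQ, List.head?_append_of_ne_nil _ hne, List.head?_eq_head hne]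
    · rw [if_pos hs]
      have hP1ne : P1 ≠ [] := by
        intro hnil
        have := seg_length f 0 s
        rw [hP1] at hnil
        rw [hnil] at this
        simp at this
        omega
      rw [hL, List.append_assoc, List.head?_append_of_ne_nil _ hP1ne,
        hP1, head?_seg f 0 s (by omega)]
  have hlast : L.getLast hLne = z := by
    rw [← Option.some_inj, ← List.getLast?_eq_getLast]
    rw [hL, List.getLast?_append_of_ne_nil _ (by simp), List.getLast?_append_of_ne_nil _ (by simp)]
    simp
  have hzL : z ∈ L := by
    rw [hL]
    simp
  have hbound := cycle_bound hlongest L (by omega) hnd hch hLne ?_ hzL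
  · omega
  · rw [hlast, hhead]
    rcases Nat.eq_zero_or_pos s with hs | hs
    · rw [if_neg (by omega)]
      exact hin0 hs
    · rw [if_pos hs]
      exact hfz2

lemma reach_list {V : Type*} {A : V → V → Prop} {S : Set V} {u v : V}
    (h : Relation.ReflTransGen (fun a b => a ∈ S ∧ b ∈ S ∧ A a b) u v) :
    u = v ∨ ∃ L : List V, L.Chain' A ∧ L.Nodup ∧ (∀ w ∈ L, w ∈ S) ∧ 2 ≤ L.length ∧
      L.head? = some u ∧ L.getLast? = some v := by
  induction h using Relation.ReflTransGen.head_induction_on with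
  | refl => exact Or.inl rfl
  | @head a b hab hbv IH =>
    obtain ⟨haS, hbS, hAab⟩ := hab
    by_cases hav : a = v
    · exact Or.inl hav
    right
    rcases IH with rfl | ⟨L, hch, hnd, hS, hlen, hhd, hlast⟩
    · refine ⟨[a, b], ?_, ?_, ?_, by simp, rfl, rfl⟩
      · simp [List.chain'_cons, hAab, List.chain'_singleton]
      · simp [hav]
      · intro w hw
        rcases List.mem_cons.mp hw with rfl | hw
        · exact haS
        · rcases List.mem_cons.mp hw with rfl | hw
          · exact hbS
          · simp at hw
    · by_cases haL : a ∈ L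
      · obtain ⟨L₁, L₂, rfl⟩ := List.append_of_mem haL
        have hsub : (a :: L₂).Sublist (L₁ ++ a :: L₂) := (List.sublist_append_right _ _)
        have hL2ne : L₂ ≠ [] := by
          rintro rfl
          have : (L₁ ++ [a]).getLast? = some a := by
            rw [List.getLast?_append_of_ne_nil _ (by simp)]
            rfl
          rw [this] at hlast
          exact hav (by simpa using hlast)
        refine ⟨a :: L₂, ?_, hnd.sublist hsub, fun w hw => hS w (hsub.mem hw), ?_, rfl, ?_⟩
        · exact hch.suffix ⟨L₁, rfl⟩
        · cases L₂ with
          | nil => exact absurd rfl hL2ne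
          | cons c L₃ => simp
        · rw [← hlast, List.getLast?_append_cons]
      · refine ⟨a :: L, ?_, List.nodup_cons.mpr ⟨haL, hnd⟩, ?_, by simp; omega, rfl, ?_⟩
        · rw [List.chain'_cons']
          refine ⟨?_, hch⟩
          intro y hy
          rw [hhd] at hy
          obtain rfl : y = b := by simpa using hy.symm
          exact hAab
        · intro w hw
          rcases List.mem_cons.mp hw with rfl | hw
          · exact haS
          · exact hS w hw
        · cases L with
          | nil => simp at hlen
          | cons c L' =>
            rw [← hlast]
            rfl

lemma first_exit {V : Type*} {A : V → V → Prop} {P : V → Prop} :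
    ∀ (L : List V), L.Chain' A → ∀ (u v : V), L.head? = some u → P u →
      L.getLast? = some v → ¬ P v →
      ∃ (Q : List V) (w : V) (hne : Q ≠ []), (Q ++ [w]) <+: L ∧ (∀ a ∈ Q, P a) ∧ ¬ P w ∧
        A (Q.getLast hne) w ∧ Q.head hne = u := by
  intro L
  induction L with
  | nil => intro _ u v h; simp at h
  | cons a L' IH =>
    intro hch u v hhd hu hlast hv
    obtain rfl : u = a := by simpa using hhd.symm
    cases L' with
    | nil =>
      obtain rfl : v = u := by simpa using hlast.symm
      exact absurd hu hv
    | cons b L'' =>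
      have hab : A u b := (List.chain'_cons.mp hch).1
      by_cases hPb : P b
      · obtain ⟨Q, w, hne, hpre, hQP, hPw, harc, hhd'⟩ :=
          IH (List.chain'_cons.mp hch).2 b v rfl hPb (by rw [← hlast]; rfl) hv
        refine ⟨u :: Q, w, by simp, ?_, ?_, hPw, ?_, rfl⟩
        · obtain ⟨r, hr⟩ := hpre
          exact ⟨r, by rw [← hr]; rfl⟩
        · intro c hc
          rcases List.mem_cons.mp hc with rfl | hc
          · exact hu
          · exact hQP c hc
        · rw [List.getLast_cons hne]
          exact harc
      · refine ⟨[u], b, by simp, ?_, by simpa using hu, hPb, hab, rfl⟩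
        exact ⟨L'', rfl⟩

lemma last_entry {V : Type*} {A : V → V → Prop} {P : V → Prop}
    (L : List V) (hch : L.Chain' A) (u v : V) (hhd : L.head? = some u) (hu : ¬ P u)
    (hlast : L.getLast? = some v) (hv : P v) :
    ∃ (Q : List V) (w : V) (hne : Q ≠ []), Q.Sublist L ∧ w ∈ L ∧ (∀ a ∈ Q, P a) ∧ ¬ P w ∧
      A w (Q.head hne) ∧ Q.getLast hne = v ∧ Q.Chain' A := by
  have hch' : L.reverse.Chain' (fun a b => A b a) := by
    rw [List.chain'_reverse]
    exact hch
  obtain ⟨Q', w, hne', hpre, hQP, hPw, harc, hhd'⟩ :=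
    first_exit (A := fun a b => A b a) L.reverse hch' v u
      (by rw [List.head?_reverse]; exact hlast) hv
      (by rw [List.getLast?_reverse]; exact hhd) hu
  have hQ'pre : Q' <+: L.reverse := (List.prefix_append Q' [w]).trans hpre
  have hQ'sub : Q'.Sublist L.reverse := hQ'pre.sublist
  refine ⟨Q'.reverse, w, by simp [hne'], ?_, ?_, ?_, hPw, ?_, ?_, ?_⟩
  · have := hQ'sub.reverse
    simpa using this
  · have : w ∈ L.reverse := hpre.sublist.mem (by simp)
    simpa using this
  · intro a ha
    exact hQP a (by simpa using ha)
  · rw [List.head_reverse]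
    exact harc
  · rw [List.getLast_reverse]
    exact hhd'
  · rw [List.chain'_reverse]
    exact hch'.prefix hQ'pre

lemma count_lemma (m : ℕ) (hm : 2 ≤ m) (na nb : ℕ → ℕ)
    (ha : ∀ j, na j ≤ 1) (hb : ∀ j, nb j ≤ 1)
    (hfb : ∀ j, j + 1 < m → nb j + na (j+1) ≤ 1)
    (hsum : ∑ j ∈ Finset.range m, (na j + nb j) = m + 1) :
    na 0 = 1 ∧ nb (m-1) = 1 ∧ ∀ j, j + 1 < m → nb j + na (j+1) = 1 := by
  obtain ⟨k, rfl⟩ : ∃ k, m = k + 1 := ⟨m - 1, by omega⟩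
  rw [Finset.sum_add_distrib, Finset.sum_range_succ' na, Finset.sum_range_succ nb] at hsum
  have hmid : ∑ j ∈ Finset.range k, (nb j + na (j+1)) =
      ∑ j ∈ Finset.range k, na (j+1) + ∑ j ∈ Finset.range k, nb j := by
    rw [← Finset.sum_add_distrib]
    exact Finset.sum_congr rfl (fun j _ => by omega)
  have hle : ∑ j ∈ Finset.range k, (nb j + na (j+1)) ≤ k := by
    calc ∑ j ∈ Finset.range k, (nb j + na (j+1)) ≤ ∑ j ∈ Finset.range k, 1 :=
      Finset.sum_le_sum (fun j hj => hfb j (by simp at hj; omega))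
    _ = k := by simp
  have hna0 : na 0 = 1 := by
    have := ha 0
    have := hb k
    omega
  have hnbk : nb (k+1-1) = 1 := by
    have := ha 0
    have := hb k
    simp only [Nat.add_sub_cancel]
    omega
  refine ⟨hna0, hnbk, ?_⟩
  have hsum2 : ∑ j ∈ Finset.range k, (nb j + na (j+1)) = ∑ j ∈ Finset.range k, 1 := by
    have := ha 0
    have := hb k
    simp only [Finset.sum_const, Finset.card_range, smul_eq_mul, mul_one]
    omega
  have hall := (Finset.sum_eq_sum_iff_of_le
    (fun j hj => hfb j (by simp at hj; omega))).mp hsum2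
  intro j hj
  exact hall j (by simp; omega)

lemma ncard_sep {V : Type*} {m : ℕ} (x : Fin m → V) (hxinj : Function.Injective x)
    (P : V → Prop) [DecidablePred P] :
    {v ∈ Set.range x | P v}.ncard = ∑ i : Fin m, if P (x i) then 1 else 0 := by
  have himg : {v ∈ Set.range x | P v} = x '' {i | P (x i)} := by
    ext v
    simp only [Set.mem_setOf_eq, Set.mem_image, Set.mem_range]
    constructor
    · rintro ⟨⟨i, rfl⟩, hp⟩
      exact ⟨i, hp, rfl⟩
    · rintro ⟨i, hp, rfl⟩
      exact ⟨⟨i, rfl⟩, hp⟩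
  rw [himg, Set.ncard_image_of_injective _ hxinj, Set.ncard_eq_toFinset_card',
    Set.toFinset_setOf, Finset.card_filter]

/-- In the situation of Lemma 4, there exists `l` with `2 ≤ l ≤ m - 1` such that
every vertex of `{x_l, …, x_m}` dominates both `y₁` and `y₂`, and both `y₁` and `y₂`
dominate every vertex of `{x₁, …, x_l}`.  (The path `x₁ … x_m` is indexed by `Fin m`,
so the paper's `x_t` corresponds to the index `t - 1`: the paper condition `l ≤ t`
reads `l - 1 ≤ i.val` and `t ≤ l` reads `i.val ≤ l - 1`.) -/
theorem statement12 {V : Type*} [Fintype V] [DecidableEq V] (A : V → V → Prop)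
    (hirr : Irreflexive A)
    (n : ℕ) (hcard : Fintype.card V = n)
    (h2strong : IsKStrong A 2)
    (hnonham : ¬ IsHamiltonian A)
    (z : V)
    (hdeg : ∀ v : V, v ≠ z → n + 1 ≤ degree A v)
    (hdegz : degree A z ≤ n - 2)
    (m : ℕ) (hm2 : 2 ≤ m) (hmn : m ≤ n - 3)
    -- the cycle C = x₁ x₂ … x_m z x₁ of length m + 1 through z
    (x : Fin m → V) (hxinj : Function.Injective x) (hzx : z ∉ Set.range x)
    (harc : ∀ (i : Fin m) (h : i.val + 1 < m), A (x i) (x ⟨i.val + 1, h⟩))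
    (harcz1 : A (x ⟨m - 1, by omega⟩) z)
    (harcz2 : A z (x ⟨0, by omega⟩))
    -- C is a longest cycle through z
    (hlongest : ∀ (r : ℕ) (c : Fin r → V), IsCycle A c → z ∈ Set.range c → r ≤ m + 1)
    (Y : Set V) (hY : Y = (Set.range x ∪ {z})ᶜ)
    (y₁ y₂ : V) (hy₁ : y₁ ∈ Y) (hy₂ : y₂ ∈ Y) (hyne : y₁ ≠ y₂)
    -- y₁ and y₂ are mutually reachable in D⟨Y⟩
    (hreach₁ : ReachIn A Y y₁ y₂) (hreach₂ : ReachIn A Y y₂ y₁)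
    (hdy₁ : degreeIn A y₁ (Set.range x) = m + 1)
    (hdy₂ : degreeIn A y₂ (Set.range x) = m + 1)
    : ∃ l : ℕ, 2 ≤ l ∧ l ≤ m - 1 ∧
        (∀ i : Fin m, l - 1 ≤ i.val → A (x i) y₁ ∧ A (x i) y₂) ∧
        (∀ i : Fin m, i.val ≤ l - 1 → A y₁ (x i) ∧ A y₂ (x i)) := by
  classical
  set f : ℕ → V := fun j => if h : j < m then x ⟨j, h⟩ else z with hf
  have hfx : ∀ (i : Fin m), f i.val = x i := by
    intro i
    simp only [hf, i.2, dif_pos]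
  have hfx' : ∀ (j : ℕ) (h : j < m), f j = x ⟨j, h⟩ := by
    intro j h
    simp only [hf, h, dif_pos]
  have hfinj : ∀ i j, i < m → j < m → f i = f j → i = j := by
    intro i j hi hj he
    rw [hfx' i hi, hfx' j hj] at he
    have := hxinj he
    exact congrArg Fin.val this
  have hfz : ∀ i, i < m → f i ≠ z := by
    intro i hi he
    rw [hfx' i hi] at he
    exact hzx ⟨_, he⟩
  have hfarc : ∀ i, i + 1 < m → A (f i) (f (i+1)) := by
    intro i hi
    rw [hfx' i (by omega), hfx' (i+1) hi]
    exact harc ⟨i, by omega⟩ hi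
  have hfz1 : A (f (m-1)) z := by
    rw [hfx' (m-1) (by omega)]
    exact harcz1
  have hfz2 : A z (f 0) := by
    rw [hfx' 0 (by omega)]
    exact harcz2
  have hYf : ∀ v ∈ Y, ∀ i, i < m → v ≠ f i := by
    intro v hv i hi he
    rw [hY] at hv
    exact hv (Or.inl ⟨⟨i, hi⟩, (he.trans (hfx' i hi)).symm⟩)
  have hYz : z ∉ Y := by
    rw [hY]
    intro hc
    exact hc (Or.inr rfl)
  -- master assembly
  have asm := fun s t hst htm Q hne hQY hQnd hQch hin hin0 hout hout0 =>
    assemble (Y := Y) hm2 f hfinj hfz hfarc hfz1 hfz2 hYf hYz hlongest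
      s t hst htm Q hne hQY hQnd hQch hin hin0 hout hout0
  -- indicator functions
  set na1 : ℕ → ℕ := fun j => if A y₁ (f j) then 1 else 0 with hna1d
  set nb1 : ℕ → ℕ := fun j => if A (f j) y₁ then 1 else 0 with hnb1d
  set na2 : ℕ → ℕ := fun j => if A y₂ (f j) then 1 else 0 with hna2d
  set nb2 : ℕ → ℕ := fun j => if A (f j) y₂ then 1 else 0 with hnb2d
  have hna1 : ∀ j, (na1 j = 1 ↔ A y₁ (f j)) ∧ na1 j ≤ 1 := by
    intro j; by_cases h : A y₁ (f j) <;> simp [hna1d, h]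
  have hnb1 : ∀ j, (nb1 j = 1 ↔ A (f j) y₁) ∧ nb1 j ≤ 1 := by
    intro j; by_cases h : A (f j) y₁ <;> simp [hnb1d, h]
  have hna2 : ∀ j, (na2 j = 1 ↔ A y₂ (f j)) ∧ na2 j ≤ 1 := by
    intro j; by_cases h : A y₂ (f j) <;> simp [hna2d, h]
  have hnb2 : ∀ j, (nb2 j = 1 ↔ A (f j) y₂) ∧ nb2 j ≤ 1 := by
    intro j; by_cases h : A (f j) y₂ <;> simp [hnb2d, h]
  -- sums
  have hsum : ∀ (y : V), degreeIn A y (Set.range x) = m + 1 →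
      ∑ j ∈ Finset.range m, ((if A y (f j) then 1 else 0) + (if A (f j) y then 1 else 0))
        = m + 1 := by
    intro y hdy
    rw [degreeIn] at hdy
    rw [ncard_sep x hxinj (fun v => A y v), ncard_sep x hxinj (fun v => A v y)] at hdy
    rw [Finset.sum_add_distrib]
    rw [← Fin.sum_univ_eq_sum_range (fun j => if A y (f j) then 1 else 0) m,
      ← Fin.sum_univ_eq_sum_range (fun j => if A (f j) y then 1 else 0) m]
    rw [← hdy]
    congr 1 <;> exact Finset.sum_congr rfl (fun i _ => by rw [hfx i])
  have hsum1 : ∑ j ∈ Finset.range m, (na1 j + nb1 j) = m + 1 := hsum y₁ hdy₁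
  have hsum2 : ∑ j ∈ Finset.range m, (na2 j + nb2 j) = m + 1 := hsum y₂ hdy₂
  -- reach paths as lists
  obtain ⟨L12, hch12, hnd12, hS12, hlen12, hhd12, hlast12⟩ :=
    (reach_list hreach₁).resolve_left hyne
  obtain ⟨L21, hch21, hnd21, hS21, hlen21, hhd21, hlast21⟩ :=
    (reach_list hreach₂).resolve_left (Ne.symm hyne)
  have hL12ne : L12 ≠ [] := by intro h; rw [h] at hlen12; simp at hlen12
  have hL21ne : L21 ≠ [] := by intro h; rw [h] at hlen21; simp at hlen21
  have hhd12' : L12.head hL12ne = y₁ := by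
    rw [List.head?_eq_head hL12ne] at hhd12; exact Option.some_inj.mp hhd12
  have hlast12' : L12.getLast hL12ne = y₂ := by
    rw [List.getLast?_eq_getLast hL12ne] at hlast12; exact Option.some_inj.mp hlast12
  have hhd21' : L21.head hL21ne = y₂ := by
    rw [List.head?_eq_head hL21ne] at hhd21; exact Option.some_inj.mp hhd21
  have hlast21' : L21.getLast hL21ne = y₁ := by
    rw [List.getLast?_eq_getLast hL21ne] at hlast21; exact Option.some_inj.mp hlast21
  -- single-vertex insertion forbidden
  have forb1 : ∀ (y : V), y ∈ Y → ∀ j, j + 1 < m → A (f j) y → A y (f (j+1)) → False := by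
    intro y hyY j hj h1 h2
    have := asm (j+1) (j+1) le_rfl (by omega) [y] (by simp)
      (by intro v hv; rw [List.mem_singleton] at hv; subst hv; exact hyY)
      (List.nodup_singleton y) (List.chain'_singleton y)
      (fun _ => by simpa using h1) (by omega)
      (fun _ => by simpa using h2) (by omega)
    simp at this
  -- generalized path-insertion forbidden configuration
  have forb2 : ∀ (L : List V) (hne : L ≠ []), L.Chain' A → L.Nodup → (∀ w ∈ L, w ∈ Y) →
      ∀ s t, s ≤ t → t ≤ m → t - s < L.length →
      (0 < s → A (f (s-1)) (L.head hne)) → (s = 0 → A z (L.head hne)) →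
      (t < m → A (L.getLast hne) (f t)) → (t = m → A (L.getLast hne) z) → False := by
    intro L hne hch hnd hLY s t hst htm hts hin hin0 hout hout0
    have := asm s t hst htm L hne hLY hnd hch hin hin0 hout hout0
    omega
  -- counting conclusions
  have c1 := count_lemma m hm2 na1 nb1 (fun j => (hna1 j).2) (fun j => (hnb1 j).2)
    (fun j hj => by
      by_contra hc
      push_neg at hc
      have h1 : nb1 j = 1 := by have := (hnb1 j).2; have := (hna1 (j+1)).2; omega
      have h2 : na1 (j+1) = 1 := by have := (hnb1 j).2; have := (hna1 (j+1)).2; omega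
      exact forb1 y₁ hy₁ j hj ((hnb1 j).1.mp h1) ((hna1 (j+1)).1.mp h2)) hsum1
  have c2 := count_lemma m hm2 na2 nb2 (fun j => (hna2 j).2) (fun j => (hnb2 j).2)
    (fun j hj => by
      by_contra hc
      push_neg at hc
      have h1 : nb2 j = 1 := by have := (hnb2 j).2; have := (hna2 (j+1)).2; omega
      have h2 : na2 (j+1) = 1 := by have := (hnb2 j).2; have := (hna2 (j+1)).2; omega
      exact forb1 y₂ hy₂ j hj ((hnb2 j).1.mp h1) ((hna2 (j+1)).1.mp h2)) hsum2
  -- cross forbidden: x_j → y₁ ⇝ y₂ → x_{j+1} and symmetric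
  have cross12 : ∀ j, j + 1 < m → ¬(nb1 j = 1 ∧ na2 (j+1) = 1) := by
    rintro j hj ⟨h1, h2⟩
    refine forb2 L12 hL12ne hch12 hnd12 hS12 (j+1) (j+1) le_rfl (by omega) (by omega)
      (fun _ => ?_) (by omega) (fun _ => ?_) (by omega)
    · rw [hhd12', Nat.add_sub_cancel]
      exact (hnb1 j).1.mp h1
    · rw [hlast12']
      exact (hna2 (j+1)).1.mp h2
  have cross21 : ∀ j, j + 1 < m → ¬(nb2 j = 1 ∧ na1 (j+1) = 1) := by
    rintro j hj ⟨h1, h2⟩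
    refine forb2 L21 hL21ne hch21 hnd21 hS21 (j+1) (j+1) le_rfl (by omega) (by omega)
      (fun _ => ?_) (by omega) (fun _ => ?_) (by omega)
    · rw [hhd21', Nat.add_sub_cancel]
      exact (hnb2 j).1.mp h1
    · rw [hlast21']
      exact (hna1 (j+1)).1.mp h2
  -- pattern equality
  have haeq : ∀ j, j < m → na1 j = na2 j := by
    intro j hjm
    match j with
    | 0 => rw [c1.1, c2.1]
    | j+1 =>
      have e1 := c1.2.2 j hjm
      have e2 := c2.2.2 j hjm
      have x1 := cross12 j hjm
      have x2 := cross21 j hjm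
      have := (hna1 (j+1)).2; have := (hna2 (j+1)).2
      have := (hnb1 j).2; have := (hnb2 j).2
      omega
  have hbeq : ∀ j, j < m → nb1 j = nb2 j := by
    intro j hjm
    rcases Nat.lt_or_ge (j+1) m with h | h
    · have e1 := c1.2.2 j h
      have e2 := c2.2.2 j h
      have := haeq (j+1) h
      omega
    · have hj : j = m - 1 := by omega
      rw [hj, c1.2.1, c2.2.1]
  -- skip-one forbidden leading to zero-propagation
  have hprop : ∀ j, 1 ≤ j → j + 1 < m → na1 j = 0 → na1 (j+1) = 0 := by
    intro j hj1 hjm hz0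
    by_contra hc
    have hval : na1 (j+1) = 1 := by have := (hna1 (j+1)).2; omega
    have hnb1j : nb1 (j-1) = 1 := by
      have := c1.2.2 (j-1) (by omega)
      rw [show j - 1 + 1 = j by omega] at this
      omega
    have hna2' : na2 (j+1) = 1 := by rw [← haeq (j+1) hjm]; exact hval
    refine forb2 L12 hL12ne hch12 hnd12 hS12 j (j+1) (by omega) (by omega) (by omega)
      (fun _ => ?_) (by omega) (fun _ => ?_) (by omega)
    · rw [hhd12']
      exact (hnb1 (j-1)).1.mp hnb1j
    · rw [hlast12']
      exact (hna2 (j+1)).1.mp hna2'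
  -- two 2-strong contradictions
  -- Case A: all na1 = 1 on [0, m) is impossible
  have caseA : ¬ (∀ j, j < m → na1 j = 1) := by
    intro hall
    set S : Set V := {x ⟨m-1, by omega⟩} with hSdef
    have hzS : z ∈ Sᶜ := by
      intro hc
      exact hzx ⟨_, (Set.mem_singleton_iff.mp hc).symm⟩
    have hy1S : y₁ ∈ Sᶜ := by
      intro hc
      exact hYf y₁ hy₁ (m-1) (by omega)
        ((Set.mem_singleton_iff.mp hc).trans (hfx' (m-1) (by omega)).symm)
    have hre := h2strong.2 S (by rw [hSdef, Set.ncard_singleton]) z hzS y₁ hy1S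
    rcases reach_list hre with he | ⟨L, hch, hnd, hSL, hlen, hhd, hlast⟩
    · exact hYz (he ▸ hy₁)
    · obtain ⟨Q, w, hne, hQsub, hwL, hQY, hwY, hwarc, hQlast, hQch⟩ :=
        last_entry (P := (· ∈ Y)) L hch z y₁ hhd hYz hlast hy₁
      have hwS : w ∈ Sᶜ := hSL w hwL
      have hwXz : w ∈ Set.range x ∪ {z} := by
        by_contra hc
        exact hwY (hY ▸ hc)
      rcases hwXz with ⟨i, rfl⟩ | hwz
      · have hine : i.val ≠ m - 1 := by
          intro he
          apply hwS
          rw [hSdef, Set.mem_singleton_iff]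
          congr 1
          exact Fin.ext he
        have him : i.val + 1 < m := by have := i.2; omega
        refine forb2 Q hne hQch (hnd.sublist hQsub) hQY (i.val+1) (i.val+1) le_rfl
          (by omega) (by simpa using List.length_pos.mpr hne)
          (fun _ => ?_) (by omega) (fun _ => ?_) (by omega)
        · rw [Nat.add_sub_cancel, hfx i]
          exact hwarc
        · rw [hQlast, hfx' (i.val+1) him]
          have := hall (i.val+1) him
          rw [← hfx' (i.val+1) him]
          exact (hna1 (i.val+1)).1.mp this
      · obtain rfl : w = z := hwz
        refine forb2 Q hne hQch (hnd.sublist hQsub) hQY 0 0 le_rfl (by omega)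
          (by simpa using List.length_pos.mpr hne)
          (by omega) (fun _ => hwarc) (fun _ => ?_) (by omega)
        · rw [hQlast]
          exact (hna1 0).1.mp (hall 0 (by omega))
  -- Case B: all nb2 = 1 on [0, m) is impossible
  have caseB : ¬ (∀ j, j < m → nb2 j = 1) := by
    intro hall
    set S : Set V := {x ⟨0, by omega⟩} with hSdef
    have hzS : z ∈ Sᶜ := by
      intro hc
      exact hzx ⟨_, (Set.mem_singleton_iff.mp hc).symm⟩
    have hy2S : y₂ ∈ Sᶜ := by
      intro hc
      exact hYf y₂ hy₂ 0 (by omega)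
        ((Set.mem_singleton_iff.mp hc).trans (hfx' 0 (by omega)).symm)
    have hre := h2strong.2 S (by rw [hSdef, Set.ncard_singleton]) y₂ hy2S z hzS
    rcases reach_list hre with he | ⟨L, hch, hnd, hSL, hlen, hhd, hlast⟩
    · exact hYz (he ▸ hy₂)
    · obtain ⟨Q, w, hne, hQpre, hQY, hwY, hwarc, hQhead⟩ :=
        first_exit (P := (· ∈ Y)) L hch y₂ z hhd hy₂ hlast hYz
      have hQsub : Q.Sublist L := ((List.prefix_append Q [w]).trans hQpre).sublist
      have hQch : Q.Chain' A := hch.prefix ((List.prefix_append Q [w]).trans hQpre)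
      have hwL : w ∈ L := hQpre.sublist.mem (by simp)
      have hwS : w ∈ Sᶜ := hSL w hwL
      have hwXz : w ∈ Set.range x ∪ {z} := by
        by_contra hc
        exact hwY (hY ▸ hc)
      rcases hwXz with ⟨i, rfl⟩ | hwz
      · have hine : i.val ≠ 0 := by
          intro he
          apply hwS
          rw [hSdef, Set.mem_singleton_iff]
          congr 1
          exact Fin.ext he
        refine forb2 Q hne hQch (hnd.sublist hQsub) hQY i.val i.val le_rfl
          (by have := i.2; omega) (by simpa using List.length_pos.mpr hne)
          (fun _ => ?_) (by omega) (fun _ => ?_) (by omega)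
        · rw [hQhead]
          exact (hnb2 (i.val-1)).1.mp (hall (i.val-1) (by have := i.2; omega))
        · rw [hfx i]
          exact hwarc
      · obtain rfl : w = z := hwz
        refine forb2 Q hne hQch (hnd.sublist hQsub) hQY m m le_rfl le_rfl
          (by simpa using List.length_pos.mpr hne)
          (fun _ => ?_) (by omega) (by omega) (fun _ => hwarc)
        · rw [hQhead]
          exact (hnb2 (m-1)).1.mp (hall (m-1) (by omega))
  -- extract the threshold l
  have hex : ∃ j, j < m ∧ na1 j = 0 := by
    by_contra hc
    push_neg at hc
    exact caseA (fun j hj => by have := (hna1 j).2; have := hc j hj; omega)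
  have hfind := Nat.find_spec hex
  have hmin := fun j (hj : j < Nat.find hex) => Nat.find_min hex hj
  set j₀ := Nat.find hex with hj₀def
  obtain ⟨hj₀m, hj₀0⟩ := hfind
  have hj₀min : ∀ j, j < j₀ → j < m → na1 j = 1 := by
    intro j hj hjm
    have h1 := hmin j hj
    push_neg at h1
    have h2 := (hna1 j).2
    have := h1 hjm
    omega
  have hj₀1 : 1 ≤ j₀ := by
    rcases Nat.eq_zero_or_pos j₀ with h | h
    · rw [h] at hj₀0
      rw [c1.1] at hj₀0
      omega
    · exact h
  have hzero : ∀ j, j₀ ≤ j → j < m → na1 j = 0 := by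
    intro j
    induction j with
    | zero => intro h1 h2; omega
    | succ j ih =>
      intro h1 h2
      rcases Nat.lt_or_ge j₀ (j+1) with h | h
      · exact hprop j (by omega) h2 (ih (by omega) (by omega))
      · have : j₀ = j + 1 := by omega
        rw [← this]
        exact hj₀0
  have hone : ∀ j, j < j₀ → na1 j = 1 := fun j hj => hj₀min j hj (by omega)
  -- nb1 j = 1 for j ≥ j₀ - 1
  have hnbone : ∀ j, j₀ - 1 ≤ j → j < m → nb1 j = 1 := by
    intro j h1 h2
    rcases Nat.lt_or_ge (j+1) m with h | h
    · have := c1.2.2 j h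
      have := hzero (j+1) (by omega) h
      omega
    · have : j = m - 1 := by omega
      rw [this, c1.2.1]
  have hj₀2 : 2 ≤ j₀ := by
    rcases Nat.lt_or_ge j₀ 2 with h | h
    · exfalso
      apply caseB
      intro j hj
      rw [← hbeq j hj]
      exact hnbone j (by omega) hj
    · exact h
  refine ⟨j₀, hj₀2, by omega, ?_, ?_⟩
  · intro i hi
    have h1 : nb1 i.val = 1 := hnbone i.val hi i.2
    have h2 : nb2 i.val = 1 := by rw [← hbeq i.val i.2]; exact h1
    rw [← hfx i]
    exact ⟨(hnb1 i.val).1.mp h1, (hnb2 i.val).1.mp h2⟩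
  · intro i hi
    have hlt : i.val < j₀ := by omega
    have h1 : na1 i.val = 1 := hone i.val hlt
    have h2 : na2 i.val = 1 := by rw [← haeq i.val i.2]; exact h1
    rw [← hfx i]
    exact ⟨(hna1 i.val).1.mp h1, (hna2 i.val).1.mp h2⟩
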